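/- arXiv:2107.02598 — 2 statements merged into one kernel-verified Lean document; each statement's English description precedes it below -/
import Mathlib

section
/- Let v and w be unit vectors in ℝ³ with (v · w)² ≠ 1, and let n = v × w. Then the outer product of the normalized vector n̂ = n/‖n‖ with itself satisfies n̂ ⊗ n̂ = I - (1/(1 + v·w)) [ v ⊗ w + w ⊗ v + 2 (v−w)/‖v−w‖ ⊗ (v−w)/‖v−w‖ ]. -/
open Matrix

/-- Euclidean norm on ℝ³. -/
noncomputable def enorm (v : Fin 3 → ℝ) : ℝ := Real.sqrt (v ⬝ᵥ v)

/-- Cross product on ℝ³. -/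
def cross3 (a b : Fin 3 → ℝ) : Fin 3 → ℝ :=
  ![a 1 * b 2 - a 2 * b 1, a 2 * b 0 - a 0 * b 2, a 0 * b 1 - a 1 * b 0]

/-- Skew-symmetric cross-product matrix [v]ₓ. -/
def crossMat (v : Fin 3 → ℝ) : Matrix (Fin 3) (Fin 3) ℝ :=
  !![0, -v 2, v 1; v 2, 0, -v 0; -v 1, v 0, 0]

/-- Normalization x̂ = x / ‖x‖. -/
noncomputable def hat (x : Fin 3 → ℝ) : Fin 3 → ℝ := (_root_.enorm x)⁻¹ • x

/-- Frobenius norm of a 3×3 matrix. -/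
noncomputable def frobNorm (M : Matrix (Fin 3) (Fin 3) ℝ) : ℝ :=
  Real.sqrt (∑ i, ∑ j, (M i j) ^ 2)

lemma dot_self_nonneg (x : Fin 3 → ℝ) : 0 ≤ x ⬝ᵥ x := by
  simp only [dotProduct, Fin.sum_univ_three]
  nlinarith [mul_self_nonneg (x 0), mul_self_nonneg (x 1), mul_self_nonneg (x 2)]

lemma hat_vmv (x : Fin 3 → ℝ) :
    vecMulVec (hat x) (hat x) = (x ⬝ᵥ x)⁻¹ • vecMulVec x x := by
  have hs : Real.sqrt (x ⬝ᵥ x) * Real.sqrt (x ⬝ᵥ x) = x ⬝ᵥ x :=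
    Real.mul_self_sqrt (dot_self_nonneg x)
  ext i j
  simp only [vecMulVec, hat, _root_.enorm, Matrix.smul_apply, Matrix.of_apply, Pi.smul_apply,
    smul_eq_mul]
  rw [show (x ⬝ᵥ x)⁻¹ = (Real.sqrt (x ⬝ᵥ x))⁻¹ * (Real.sqrt (x ⬝ᵥ x))⁻¹ by
    rw [← mul_inv, hs]]
  ring

lemma key (v w : Fin 3 → ℝ) (hvv : v ⬝ᵥ v = 1) (hww : w ⬝ᵥ w = 1) :
    vecMulVec (cross3 v w) (cross3 v w) =
      (1 - (v ⬝ᵥ w) ^ 2) • (1 : Matrix (Fin 3) (Fin 3) ℝ)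
        - (1 - v ⬝ᵥ w) • (vecMulVec v w + vecMulVec w v)
        - vecMulVec (v - w) (v - w) := by
  simp only [dotProduct, Fin.sum_univ_three] at hvv hww ⊢
  ext i j
  fin_cases i <;> fin_cases j <;>
    simp [cross3, vecMulVec, Matrix.sub_apply, Matrix.smul_apply, Matrix.add_apply,
      Matrix.one_apply, Pi.sub_apply, smul_eq_mul]
  · linear_combination ((w 0 * w 0 + w 1 * w 1 + w 2 * w 2) - w 0 * w 0) * hvv +
      (1 - v 0 * v 0) * hww
  · linear_combination (-(w 0 * w 1)) * hvv + (-(v 0 * v 1)) * hww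
  · linear_combination (-(w 0 * w 2)) * hvv + (-(v 0 * v 2)) * hww
  · linear_combination (-(w 1 * w 0)) * hvv + (-(v 1 * v 0)) * hww
  · linear_combination ((w 0 * w 0 + w 1 * w 1 + w 2 * w 2) - w 1 * w 1) * hvv +
      (1 - v 1 * v 1) * hww
  · linear_combination (-(w 1 * w 2)) * hvv + (-(v 1 * v 2)) * hww
  · linear_combination (-(w 2 * w 0)) * hvv + (-(v 2 * v 0)) * hww
  · linear_combination (-(w 2 * w 1)) * hvv + (-(v 2 * v 1)) * hww
  · linear_combination ((w 0 * w 0 + w 1 * w 1 + w 2 * w 2) - w 2 * w 2) * hvv +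
      (1 - v 2 * v 2) * hww

theorem normal_dyadic_formula (v w : Fin 3 → ℝ)
    (hv : _root_.enorm v = 1) (hw : _root_.enorm w = 1) (h : (v ⬝ᵥ w) ^ 2 ≠ 1) :
    vecMulVec (hat (cross3 v w)) (hat (cross3 v w)) =
      1 - (1 / (1 + v ⬝ᵥ w)) •
        (vecMulVec v w + vecMulVec w v +
          (2 : ℝ) • vecMulVec (hat (v - w)) (hat (v - w))) := by
  have hvv : v ⬝ᵥ v = 1 := Real.sqrt_eq_one.mp hv
  have hww : w ⬝ᵥ w = 1 := Real.sqrt_eq_one.mp hw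
  set d := v ⬝ᵥ w with hd
  have hn : cross3 v w ⬝ᵥ cross3 v w = 1 - d ^ 2 := by
    simp only [dotProduct, Fin.sum_univ_three] at hvv hww
    simp [cross3, hd, dotProduct, Fin.sum_univ_three]
    linear_combination (w 0 * w 0 + w 1 * w 1 + w 2 * w 2) * hvv + hww
  have hΔ : (v - w) ⬝ᵥ (v - w) = 2 - 2 * d := by
    simp only [dotProduct, Fin.sum_univ_three, Pi.sub_apply] at hvv hww ⊢
    simp only [hd, dotProduct, Fin.sum_univ_three]
    linear_combination hvv + hww
  have hd2 : d ^ 2 < 1 := by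
    have := dot_self_nonneg (cross3 v w)
    rw [hn] at this
    rcases lt_or_eq_of_le (by linarith : d ^ 2 ≤ 1) with h1 | h1
    · exact h1
    · exact absurd h1 h
  have h1p : 1 + d ≠ 0 := by nlinarith
  have h1m : 1 - d ≠ 0 := by nlinarith
  have h1sq : 1 - d ^ 2 ≠ 0 := by nlinarith
  have h2m : (2 : ℝ) - 2 * d ≠ 0 := by nlinarith
  have h2sq : (2 : ℝ) - d ^ 2 * 2 ≠ 0 := by nlinarith
  rw [hat_vmv, hat_vmv, hn, hΔ, key v w hvv hww, ← hd]
  match_scalars <;> field_simp <;> ring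
end

section
/- Let v, w be unit vectors in ℝ³ with (v·w)² ≠ 1 and let n̂ be the normalization of v × w. Then n̂ ⊗ n̂ = I − (v ⊗ w + w ⊗ v)/(1 + v·w) − ((v − w) ⊗ (v − w))/(1 − (v·w)²). -/
open Matrix

lemma cross_outer (v w : Fin 3 → ℝ) :
    vecMulVec (cross3 v w) (cross3 v w) =
      ((v ⬝ᵥ v) * (w ⬝ᵥ w) - (v ⬝ᵥ w) ^ 2) • (1 : Matrix (Fin 3) (Fin 3) ℝ)
        + (v ⬝ᵥ w) • (vecMulVec v w + vecMulVec w v)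
        - (w ⬝ᵥ w) • vecMulVec v v - (v ⬝ᵥ v) • vecMulVec w w := by
  ext i j
  fin_cases i <;> fin_cases j <;>
    simp [vecMulVec, cross3, dotProduct, Fin.sum_univ_three, Matrix.one_apply] <;> ring

lemma cross_dot (v w : Fin 3 → ℝ) :
    cross3 v w ⬝ᵥ cross3 v w = (v ⬝ᵥ v) * (w ⬝ᵥ w) - (v ⬝ᵥ w) ^ 2 := by
  simp [cross3, dotProduct, Fin.sum_univ_three]; ring

lemma vmv_sub (v w : Fin 3 → ℝ) :
    vecMulVec (v - w) (v - w) =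
      vecMulVec v v - (vecMulVec v w + vecMulVec w v) + vecMulVec w w := by
  ext i j; simp [vecMulVec]; ring

theorem normal_dyadic_formula' (v w : Fin 3 → ℝ)
    (hv : _root_.enorm v = 1) (hw : _root_.enorm w = 1) (h : (v ⬝ᵥ w) ^ 2 ≠ 1) :
    vecMulVec (hat (cross3 v w)) (hat (cross3 v w)) =
      1 - (1 / (1 + v ⬝ᵥ w)) • (vecMulVec v w + vecMulVec w v) -
        (1 / (1 - (v ⬝ᵥ w) ^ 2)) • vecMulVec (v - w) (v - w) := by
  have hvnn : (0:ℝ) ≤ v ⬝ᵥ v :=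
    Finset.sum_nonneg fun i _ => mul_self_nonneg _
  have hwnn : (0:ℝ) ≤ w ⬝ᵥ w :=
    Finset.sum_nonneg fun i _ => mul_self_nonneg _
  have hv1 : v ⬝ᵥ v = 1 := by
    have := Real.mul_self_sqrt hvnn
    rw [show Real.sqrt (v ⬝ᵥ v) = _root_.enorm v from rfl, hv] at this
    linarith
  have hw1 : w ⬝ᵥ w = 1 := by
    have := Real.mul_self_sqrt hwnn
    rw [show Real.sqrt (w ⬝ᵥ w) = _root_.enorm w from rfl, hw] at this
    linarith
  set d := v ⬝ᵥ w with hd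
  have hs : (1:ℝ) - d ^ 2 ≠ 0 := by
    intro hc; apply h; linarith
  have h1d : (1:ℝ) + d ≠ 0 := by
    intro hc
    apply h
    have : d = -1 := by linarith
    rw [this]; ring
  have hcd : cross3 v w ⬝ᵥ cross3 v w = 1 - d ^ 2 := by
    rw [cross_dot, hv1, hw1]; ring
  have hspos : (0:ℝ) < 1 - d ^ 2 := by
    have : (0:ℝ) ≤ cross3 v w ⬝ᵥ cross3 v w :=
      Finset.sum_nonneg fun i _ => mul_self_nonneg _
    rw [hcd] at this
    rcases lt_or_eq_of_le this with h' | h'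
    · exact h'
    · exact absurd h'.symm hs
  have henorm : _root_.enorm (cross3 v w) = Real.sqrt (1 - d ^ 2) := by
    rw [_root_.enorm, hcd]
  have hhat : vecMulVec (hat (cross3 v w)) (hat (cross3 v w)) =
      (1 - d ^ 2)⁻¹ • vecMulVec (cross3 v w) (cross3 v w) := by
    ext i j
    simp only [hat, henorm, vecMulVec, Matrix.of_apply, Pi.smul_apply, smul_eq_mul,
      Matrix.smul_apply]
    rw [← Real.sqrt_inv]
    have : Real.sqrt (1 - d ^ 2)⁻¹ * Real.sqrt (1 - d ^ 2)⁻¹ = (1 - d ^ 2)⁻¹ :=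
      Real.mul_self_sqrt (by positivity)
    ring_nf
    ring_nf at this
    rw [this]
  rw [hhat, cross_outer, hv1, hw1, vmv_sub, ← hd]
  match_scalars <;> field_simp <;> ring
end
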